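/- If 7 l_3 ≥ 4(l_1 + l_2) + 17 and l_1(l_3 − 1) + l_2 > 3, then the gap sequence (μ_n) of the Cantor-like sequence satisfies μ_{2^m} > Σ_{i=1}^{2^m − 1} μ_i + 2^m + (3^m − 1)/2 for all m ≥ 1. -/

import Mathlib

/-- if 7l₃ ≥ 4(l₁+l₂)+17 and l₁(l₃−1)+l₂ > 3, then
    μ_{2^m} > ∑_{i=1}^{2^m−1} μ_i + 2^m + (3^m − 1)/2 for all m ≥ 1,
    where (3^m − 1)/2 = ∑_{i<m} 3^i. -/
theorem stmt7 (l1 l2 l3 : ℕ) (hl3 : 3 ≤ l3)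
    (hc1 : 4 * (l1 + l2) + 17 ≤ 7 * l3)
    (hc2 : 3 < l1 * (l3 - 1) + l2)
    (μ : ℕ → ℕ)
    (h1 : μ 1 = l1)
    (h2 : ∀ n : ℕ, 1 ≤ n → μ (2 * n) = l3 * μ n + l2)
    (h3 : ∀ n : ℕ, 1 ≤ n → μ (2 * n + 1) = l1) :
    ∀ m : ℕ, 1 ≤ m →
      (∑ i ∈ Finset.Icc 1 (2 ^ m - 1), μ i) + 2 ^ m + (∑ i ∈ Finset.range m, 3 ^ i)
        < μ (2 ^ m) := by
  obtain ⟨c, rfl⟩ : ∃ c, l3 = c + 3 := ⟨l3 - 3, by omega⟩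
  -- sum recurrence
  have key : ∀ k : ℕ, ∑ i ∈ Finset.Icc 1 (2 * k + 1), μ i
      = (c + 3) * (∑ i ∈ Finset.Icc 1 k, μ i) + (k + 1) * l1 + k * l2 := by
    intro k
    induction k with
    | zero => simp [h1]
    | succ k ih =>
      have e1 : 2 * (k + 1) + 1 = (2 * k + 1) + 1 + 1 := by ring
      rw [e1, Finset.sum_Icc_succ_top (by omega), Finset.sum_Icc_succ_top (by omega),
          Finset.sum_Icc_succ_top (by omega : 1 ≤ k + 1), ih]
      have hμe : μ (2 * k + 1 + 1) = (c + 3) * μ (k + 1) + l2 := by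
        have e2 : 2 * k + 1 + 1 = 2 * (k + 1) := by ring
        rw [e2, h2 (k + 1) (by omega)]
      have hμo : μ (2 * k + 1 + 1 + 1) = l1 := by
        have e3 : 2 * k + 1 + 1 + 1 = 2 * (k + 1) + 1 := by ring
        rw [e3, h3 (k + 1) (by omega)]
      rw [hμe, hμo]; ring
  have geo : ∀ m : ℕ, 2 * (∑ i ∈ Finset.range m, 3 ^ i) + 1 = 3 ^ m := by
    intro m
    induction m with
    | zero => simp
    | succ n ih =>
      rw [Finset.sum_range_succ, pow_succ]
      omega
  have aux : ∀ m : ℕ, 1 ≤ m → 3 * 2 ^ m ≤ 2 * 3 ^ m := by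
    intro m hm
    induction m with
    | zero => omega
    | succ n ih =>
      rcases Nat.eq_zero_or_pos n with h | h
      · subst h; norm_num
      · have := ih h
        rw [pow_succ, pow_succ]
        have h0 : 0 ≤ 3 ^ n := Nat.zero_le _
        nlinarith [this, h0]
  -- main induction, stated with m = n + 1
  suffices H : ∀ n : ℕ,
      (∑ i ∈ Finset.Icc 1 (2 ^ (n + 1) - 1), μ i) + 2 ^ (n + 1)
        + (∑ i ∈ Finset.range (n + 1), 3 ^ i) < μ (2 ^ (n + 1)) by
    intro m hm
    obtain ⟨n, rfl⟩ : ∃ n, m = n + 1 := ⟨m - 1, by omega⟩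
    exact H n
  intro n
  induction n with
  | zero =>
    have hμ2 : μ 2 = (c + 3) * l1 + l2 := by
      have := h2 1 (le_refl 1); rw [h1] at this; norm_num at this; exact this
    have hc2' : 3 < l1 * (c + 2) + l2 := by
      have e : c + 3 - 1 = c + 2 := by omega
      rwa [e] at hc2
    norm_num [Finset.Icc_self, Finset.sum_singleton, h1, hμ2]
    nlinarith [hc2']
  | succ n ih =>
    set p := 2 ^ (n + 1) with hp
    have hp1 : 1 ≤ p := Nat.one_le_two_pow
    set t := ∑ i ∈ Finset.range (n + 1), 3 ^ i with ht
    set a := ∑ i ∈ Finset.Icc 1 (p - 1), μ i with ha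
    set b := μ p with hb
    clear_value p t a b
    have hq : 2 * t + 1 = 3 ^ (n + 1) := by rw [ht]; exact geo (n + 1)
    have h3p : 3 * p ≤ 2 * 3 ^ (n + 1) := by rw [hp]; exact aux (n + 1) (by omega)
    have hpow2 : 2 ^ (n + 2) = 2 * p := by rw [hp]; ring
    have hS : ∑ i ∈ Finset.Icc 1 (2 ^ (n + 2) - 1), μ i
        = (c + 3) * a + p * l1 + (p - 1) * l2 := by
      have := key (p - 1)
      have e1 : 2 * (p - 1) + 1 = 2 ^ (n + 2) - 1 := by omega
      have e2 : p - 1 + 1 = p := by omega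
      rw [e1, e2] at this
      rw [this, ← ha]
    have hμ : μ (2 ^ (n + 2)) = (c + 3) * b + l2 := by
      rw [hpow2, hb]; exact h2 p hp1
    rw [hS, hμ, Finset.sum_range_succ, hpow2]
    rw [← ht, ← hq]
    obtain ⟨d, rfl⟩ : ∃ d, p = d + 1 := ⟨p - 1, by omega⟩
    simp only [Nat.add_sub_cancel] at *
    have hih : a + (d + 1) + t + 1 ≤ b := ih
    nlinarith [Nat.mul_le_mul_left (c + 3) hih, hc1, h3p, hq,
      Nat.mul_le_mul_left c (show 3 * (d + 1) ≤ 4 * t + 2 by omega)]
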